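/- Let 0 < c ≤ 1 and 0 < α < 1 be real numbers, and let q(x) = c·x^α for x ≥ 0. Then for every integer p ≥ 2 there exists v_p ∈ (0,1] such that for every x ∈ (0,1): the inequality 1 − (1 − q(x/p))^p > q(x) holds if and only if x < v_p. -/

import Mathlib

set_option maxHeartbeats 1000000


/-- Parallelization under a sublinear power law: for `q x = c * x ^ α` with
`0 < c ≤ 1` and `0 < α < 1`, for every integer `p ≥ 2` there is a threshold
`v_p ∈ (0,1]` such that for every `x ∈ (0,1)`, splitting the budget into `p`
parallel threads is beneficial iff `x < v_p`. -/
theorem parallelization_sublinear_power_law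
    (c α : ℝ) (hc0 : 0 < c) (hc1 : c ≤ 1) (hα0 : 0 < α) (hα1 : α < 1)
    (q : ℝ → ℝ) (hq : ∀ x : ℝ, q x = c * x ^ α) :
    ∀ p : ℕ, 2 ≤ p → ∃ v : ℝ, v ∈ Set.Ioc (0 : ℝ) 1 ∧
      ∀ x ∈ Set.Ioo (0 : ℝ) 1,
        (1 - (1 - q (x / (p : ℝ))) ^ p > q x ↔ x < v) := by
  intro p hp
  have hP0 : (0:ℝ) < p := by positivity
  have hP1 : (1:ℝ) < p := by exact_mod_cast lt_of_lt_of_le one_lt_two (by exact_mod_cast hp)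
  have hPα0 : (0:ℝ) < (p:ℝ)^α := Real.rpow_pos_of_pos hP0 α
  have hPα1 : 1 < (p:ℝ)^α := Real.one_lt_rpow_iff_of_pos hP0 |>.2 (Or.inl ⟨hP1, hα0⟩)
  have hPαP : (p:ℝ)^α < p := by
    calc (p:ℝ)^α < (p:ℝ)^(1:ℝ) := Real.rpow_lt_rpow_of_exponent_lt hP1 hα1
    _ = p := Real.rpow_one _
  set g : ℝ → ℝ := fun t => 1 - (1-t)^p - (p:ℝ)^α * t with hgdef
  set T : ℝ → ℝ := fun x => c * (x/(p:ℝ))^α with hTdef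
  -- basic facts about T
  have hT_pos : ∀ x : ℝ, 0 < x → 0 < T x := fun x hx =>
    mul_pos hc0 (Real.rpow_pos_of_pos (div_pos hx hP0) α)
  have hT_mono : ∀ x y : ℝ, 0 ≤ x → x < y → T x < T y := by
    intro x y hx hxy
    exact mul_lt_mul_of_pos_left
      (Real.rpow_lt_rpow (div_nonneg hx hP0.le) (by gcongr) hα0) hc0
  have hT_le1 : ∀ x : ℝ, 0 ≤ x → x ≤ 1 → T x ≤ 1 := by
    intro x hx hx1
    have h1 : (x/(p:ℝ))^α ≤ 1 :=
      Real.rpow_le_one (div_nonneg hx hP0.le)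
        (by rw [div_le_one hP0]; linarith) hα0.le
    calc c * (x/(p:ℝ))^α ≤ 1 * 1 := by
          apply mul_le_mul hc1 h1 (Real.rpow_nonneg (div_nonneg hx hP0.le) α) zero_le_one
    _ = 1 := by norm_num
  -- the inequality in terms of g and T
  have hiff : ∀ x : ℝ, 0 < x →
      (1 - (1 - q (x/(p:ℝ)))^p > q x ↔ 0 < g (T x)) := by
    intro x hx
    rw [hq, hq]
    have hqx : c * x^α = (p:ℝ)^α * (c * (x/(p:ℝ))^α) := by
      rw [← mul_assoc, mul_comm ((p:ℝ)^α) c, mul_assoc,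
        ← Real.mul_rpow hP0.le (div_nonneg hx.le hP0.le),
        mul_div_cancel₀ x hP0.ne']
    simp only [hgdef, hTdef]
    constructor <;> intro h <;> [nlinarith; nlinarith]
  -- key concavity inequality
  have key : ∀ a b : ℝ, 0 ≤ a → a ≤ b → b ≤ 1 →
      a * (1 - (1-b)^p) ≤ b * (1 - (1-a)^p) := by
    intro a b ha hab hb1
    have h1 : 1 - (1-a)^p = a * ∑ i ∈ Finset.range p, (1-a)^i := by
      linear_combination geom_sum_mul (1-a) p
    have h2 : 1 - (1-b)^p = b * ∑ i ∈ Finset.range p, (1-b)^i := by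
      linear_combination geom_sum_mul (1-b) p
    rw [h1, h2]
    have hsum : ∑ i ∈ Finset.range p, (1-b)^i ≤ ∑ i ∈ Finset.range p, (1-a)^i :=
      Finset.sum_le_sum fun i _ => pow_le_pow_left₀ (by linarith) (by linarith) i
    have hab0 : 0 ≤ a * b := mul_nonneg ha (le_trans ha hab)
    nlinarith [mul_le_mul_of_nonneg_left hsum hab0]
  -- downward closedness of positivity of g on (0,1]
  have hdown : ∀ a b : ℝ, 0 < a → a ≤ b → b ≤ 1 → 0 < g b → 0 < g a := by
    intro a b ha hab hb1 hgb
    have hb0 : 0 < b := lt_of_lt_of_le ha hab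
    have hk := key a b ha.le hab hb1
    simp only [hgdef] at hgb ⊢
    have h1 : a * ((p:ℝ)^α * b) < a * (1 - (1-b)^p) := by
      apply mul_lt_mul_of_pos_left (by linarith) ha
    have h2 : b * ((p:ℝ)^α * a) < b * (1 - (1-a)^p) := by nlinarith
    nlinarith [h2, hb0]
  -- positivity of g near 0
  have hsmall : ∀ s : ℝ, 0 < s → s ≤ ((p:ℝ) - (p:ℝ)^α)/(2*(p:ℝ)^2) → 0 < g s := by
    intro s hs0 hsle
    have hε : 0 < (p:ℝ) - (p:ℝ)^α := by linarith
    have hPP : (p:ℝ) ≤ (p:ℝ)^2 := by nlinarith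
    have h2 : (p:ℝ)^2 * s ≤ ((p:ℝ) - (p:ℝ)^α)/2 := by
      have := mul_le_mul_of_nonneg_left hsle (by positivity : (0:ℝ) ≤ (p:ℝ)^2)
      have heq : (p:ℝ)^2 * (((p:ℝ) - (p:ℝ)^α)/(2*(p:ℝ)^2)) = ((p:ℝ) - (p:ℝ)^α)/2 := by
        field_simp
      linarith [heq ▸ this]
    have hs12 : s ≤ 1/2 := by nlinarith [h2, hPP, hPα1, mul_pos hP0 hP0]
    have hcast : ((p-1:ℕ):ℝ) = (p:ℝ) - 1 := by
      push_cast [Nat.cast_sub (by omega : 1 ≤ p)]; ring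
    have hber : 1 - ((p:ℝ)-1)*s ≤ (1-s)^(p-1) := by
      have := one_add_mul_le_pow (a := -s) (by linarith) (p-1)
      rw [hcast] at this
      calc 1 - ((p:ℝ)-1)*s = 1 + ((p:ℝ)-1) * (-s) := by ring
      _ ≤ (1 + -s)^(p-1) := this
      _ = (1-s)^(p-1) := by ring_nf
    have hgeom : 1 - (1-s)^p = s * ∑ i ∈ Finset.range p, (1-s)^i := by
      linear_combination geom_sum_mul (1-s) p
    have hsum : (p:ℝ) * (1-s)^(p-1) ≤ ∑ i ∈ Finset.range p, (1-s)^i := by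
      have h : ∑ i ∈ Finset.range p, (1-s)^(p-1) ≤ ∑ i ∈ Finset.range p, (1-s)^i :=
        Finset.sum_le_sum fun i hi =>
          pow_le_pow_of_le_one (by linarith) (by linarith)
            (by have := Finset.mem_range.mp hi; omega)
      simpa [Finset.sum_const, nsmul_eq_mul] using h
    have hstep : s * ((p:ℝ) * (1-s)^(p-1)) ≤ s * ∑ i ∈ Finset.range p, (1-s)^i :=
      mul_le_mul_of_nonneg_left hsum hs0.le
    have hstep2 : s * ((p:ℝ) * (1 - ((p:ℝ)-1)*s)) ≤ s * ((p:ℝ) * (1-s)^(p-1)) :=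
      mul_le_mul_of_nonneg_left (mul_le_mul_of_nonneg_left hber hP0.le) hs0.le
    have hfin : (p:ℝ)^α * s < s * ((p:ℝ) * (1 - ((p:ℝ)-1)*s)) := by
      nlinarith [mul_le_mul_of_nonneg_left h2 hs0.le, mul_pos hs0 hε, sq_nonneg s,
        mul_nonneg hP0.le (sq_nonneg s), mul_pos hs0 hP0]
    simp only [hgdef]
    nlinarith [hgeom]
  -- the set of good budgets
  set S : Set ℝ := {x : ℝ | x ∈ Set.Ioo (0:ℝ) 1 ∧ 0 < g (T x)} with hSdef
  have hbdd : BddAbove S := ⟨1, fun x hx => hx.1.2.le⟩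
  have hne : S.Nonempty := by
    set t0 : ℝ := ((p:ℝ) - (p:ℝ)^α)/(2*(p:ℝ)^2) with ht0def
    have ht0 : 0 < t0 := by apply div_pos (by linarith) (by positivity)
    set x : ℝ := min (1/2) (t0 ^ (α⁻¹)) with hxdef
    have hx0 : 0 < x := lt_min (by norm_num) (Real.rpow_pos_of_pos ht0 _)
    have hx1 : x < 1 := lt_of_le_of_lt (min_le_left _ _) (by norm_num)
    have hTx : T x ≤ t0 := by
      have h1 : (x/(p:ℝ))^α ≤ x^α :=
        Real.rpow_le_rpow (div_nonneg hx0.le hP0.le)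
          (div_le_self hx0.le hP1.le) hα0.le
      have h2 : x^α ≤ (t0 ^ (α⁻¹))^α :=
        Real.rpow_le_rpow hx0.le (min_le_right _ _) hα0.le
      have h3 : (t0 ^ (α⁻¹))^α = t0 := by
        rw [← Real.rpow_mul ht0.le, inv_mul_cancel₀ hα0.ne', Real.rpow_one]
      have h4 : c * (x/(p:ℝ))^α ≤ 1 * (x/(p:ℝ))^α :=
        mul_le_mul_of_nonneg_right hc1 (Real.rpow_nonneg (div_nonneg hx0.le hP0.le) α)
      simp only [hTdef]
      calc c * (x/(p:ℝ))^α ≤ 1 * (x/(p:ℝ))^α := h4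
      _ = (x/(p:ℝ))^α := one_mul _
      _ ≤ x^α := h1
      _ ≤ (t0 ^ (α⁻¹))^α := h2
      _ = t0 := h3
    exact ⟨x, ⟨hx0, hx1⟩, hsmall (T x) (hT_pos x hx0) hTx⟩
  refine ⟨sSup S, ⟨?_, ?_⟩, ?_⟩
  · obtain ⟨x, hxS⟩ := hne
    exact lt_of_lt_of_le hxS.1.1 (le_csSup hbdd hxS)
  · exact csSup_le hne fun x hx => hx.1.2.le
  · rintro x ⟨hx0, hx1⟩
    rw [hiff x hx0]
    constructor
    · intro hgx
      -- continuity: find y > x still good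
      have hcT : ContinuousAt T x := by
        apply ContinuousAt.mul continuousAt_const
        exact (continuousAt_id.div_const _).rpow_const (Or.inr hα0.le)
      have hcg : ContinuousAt g (T x) := by
        apply ContinuousAt.sub
        · exact ContinuousAt.sub continuousAt_const
            ((continuousAt_const.sub continuousAt_id).pow p)
        · exact continuousAt_const.mul continuousAt_id
      have hF : ContinuousAt (fun y => g (T y)) x := hcg.comp hcT
      have hev : ∀ᶠ y in nhds x, 0 < g (T y) :=
        hF.eventually_mem (isOpen_Ioi.mem_nhds hgx)
      have hev2 : ∀ᶠ y in nhds x, y < 1 := Filter.Tendsto.eventually_lt_const hx1 Filter.tendsto_id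
      have hev3 : ∀ᶠ y in nhdsWithin x (Set.Ioi x), 0 < g (T y) ∧ y < 1 ∧ x < y := by
        refine Filter.Eventually.and ?_ (Filter.Eventually.and ?_ ?_)
        · exact nhdsWithin_le_nhds hev
        · exact nhdsWithin_le_nhds hev2
        · exact eventually_mem_nhdsWithin
      obtain ⟨y, hy, hy1, hxy⟩ := hev3.exists
      exact lt_of_lt_of_le hxy (le_csSup hbdd ⟨⟨lt_trans hx0 hxy, hy1⟩, hy⟩)
    · intro hxv
      obtain ⟨y, hyS, hxy⟩ := exists_lt_of_lt_csSup hne hxv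
      exact hdown (T x) (T y) (hT_pos x hx0)
        (hT_mono x y hx0.le hxy).le (hT_le1 y hyS.1.1.le hyS.1.2.le) hyS.2
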